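/- arXiv:0808.3438 — 2 statements merged into one kernel-verified Lean document; each statement's English description precedes it below -/
import Mathlib

section
/- Define F on W = {(T,Y) : 0 ≤ T ≤ T_c, 0 ≤ Y ≤ 2Δ₀², (T,Y) ≠ (0,0)} by F(T,Y) = ∫_{2k_B T_c ε}^{ℏω_D} h(T,Y,ξ) dξ − 1/(U₀N₀), where h(T,Y,ξ) = (1/√(ξ²+Y)) tanh(√(ξ²+Y)/(2k_B T)) for T > 0 and h(0,Y,ξ) = 1/√(ξ²+Y) for Y > 0. Then F is continuous on W. -/
open Real intervalIntegral Filter Topology MeasureTheory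

private lemma my_continuous_tanh : Continuous Real.tanh := by
  have h : Real.tanh = fun x => Real.sinh x / Real.cosh x :=
    funext fun x => Real.tanh_eq_sinh_div_cosh x
  rw [h]
  exact Real.continuous_sinh.div Real.continuous_cosh fun x => (Real.cosh_pos x).ne'

private lemma my_tanh_formula (x : ℝ) :
    Real.tanh x = (1 - Real.exp (-2*x)) / (1 + Real.exp (-2*x)) := by
  rw [Real.tanh_eq_sinh_div_cosh, Real.sinh_eq, Real.cosh_eq,
    show (-2*x) = -x + -x by ring, Real.exp_add]
  have h1 : Real.exp x * Real.exp (-x) = 1 := by rw [← Real.exp_add]; simp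
  have h2 : 0 < Real.exp x + Real.exp (-x) := by positivity
  have h3 : 0 < 1 + Real.exp (-x) * Real.exp (-x) := by positivity
  field_simp
  nlinarith [Real.exp_pos x, Real.exp_pos (-x)]

private lemma my_abs_tanh_le_one (x : ℝ) : |Real.tanh x| ≤ 1 := by
  rw [my_tanh_formula]
  have he : 0 < Real.exp (-2*x) := Real.exp_pos _
  rw [abs_div, abs_of_pos (by positivity : (0:ℝ) < 1 + Real.exp (-2*x)),
    div_le_one (by positivity)]
  rw [abs_le]
  constructor <;> nlinarith

private lemma my_tendsto_tanh_atTop : Tendsto Real.tanh atTop (𝓝 1) := by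
  have h : Tendsto (fun x : ℝ => Real.exp (-2*x)) atTop (𝓝 0) := by
    apply Real.tendsto_exp_atBot.comp
    exact Tendsto.const_mul_atTop_of_neg (by norm_num) tendsto_id
  have h2 : Tendsto (fun x : ℝ => (1 - Real.exp (-2*x)) / (1 + Real.exp (-2*x)))
      atTop (𝓝 ((1 - 0) / (1 + 0))) :=
    (tendsto_const_nhds.sub h).div (tendsto_const_nhds.add h) (by norm_num)
  have h3 : ((1:ℝ) - 0) / (1 + 0) = 1 := by norm_num
  rw [h3] at h2
  exact h2.congr fun x => (my_tanh_formula x).symm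

/-- The function `F(T,Y) = ∫_{2k_BT_cε}^{ℏω_D} h(T,Y,ξ) dξ − 1/(U₀N₀)`, where
`h(T,Y,ξ) = (1/√(ξ²+Y)) tanh(√(ξ²+Y)/(2k_BT))` for `T > 0` and
`h(0,Y,ξ) = 1/√(ξ²+Y)`, is continuous on
`W = {(T,Y) : 0 ≤ T ≤ T_c, 0 ≤ Y ≤ 2Δ₀², (T,Y) ≠ (0,0)}`. -/
theorem F_continuousOn_W
    (kB hbar ωD U0 N0 ε Tc : ℝ)
    (hkB : 0 < kB) (hhbar : 0 < hbar) (hωD : 0 < ωD)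
    (hU0 : 0 < U0) (hN0 : 0 < N0) (hε : 0 < ε) (hTc : 0 < Tc)
    (hcut : 2*kB*Tc*ε < hbar*ωD) :
    ContinuousOn
      (fun p : ℝ × ℝ =>
        (∫ ξ in (2*kB*Tc*ε)..(hbar*ωD),
          if p.1 = 0 then 1/Real.sqrt (ξ^2+p.2)
          else (1/Real.sqrt (ξ^2+p.2)) * Real.tanh (Real.sqrt (ξ^2+p.2)/(2*kB*p.1)))
        - 1/(U0*N0))
      {p : ℝ × ℝ | 0 ≤ p.1 ∧ p.1 ≤ Tc ∧ 0 ≤ p.2 ∧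
        p.2 ≤ 2*(hbar*ωD/Real.sinh (1/(U0*N0)))^2 ∧ p ≠ (0, 0)} := by
  set a := 2*kB*Tc*ε with ha_def
  set b := hbar*ωD with hb_def
  have ha : 0 < a := by positivity
  have hab : a < b := hcut
  have hI : Set.uIoc a b = Set.Ioc a b := Set.uIoc_of_le hab.le
  set W : Set (ℝ × ℝ) := {p : ℝ × ℝ | 0 ≤ p.1 ∧ p.1 ≤ Tc ∧ 0 ≤ p.2 ∧
        p.2 ≤ 2*(b/Real.sinh (1/(U0*N0)))^2 ∧ p ≠ (0, 0)} with hW_def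
  apply ContinuousOn.sub _ continuousOn_const
  intro p₀ hp₀
  obtain ⟨hT0, hTle, hY0, hYle, hne⟩ := hp₀
  apply intervalIntegral.continuousWithinAt_of_dominated_interval
    (bound := fun _ => 1/a)
  · -- measurability
    filter_upwards with x
    have m1 : Measurable fun ξ : ℝ => Real.sqrt (ξ^2 + x.2) :=
      Real.continuous_sqrt.measurable.comp ((measurable_id.pow_const 2).add_const _)
    by_cases hx : x.1 = 0
    · simp only [if_pos hx]
      exact (measurable_const.div m1).aestronglyMeasurable
    · simp only [if_neg hx]
      exact ((measurable_const.div m1).mul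
        (my_continuous_tanh.measurable.comp (m1.div_const _))).aestronglyMeasurable
  · -- bound
    filter_upwards [self_mem_nhdsWithin] with x hx
    obtain ⟨hx1, -, hx2, -, -⟩ := hx
    filter_upwards with ξ hξ
    rw [hI] at hξ
    have hξa : a < ξ := hξ.1
    have hξ0 : 0 < ξ := ha.trans hξa
    have hs : a < Real.sqrt (ξ^2 + x.2) := by
      have h1 : Real.sqrt (ξ^2) ≤ Real.sqrt (ξ^2 + x.2) :=
        Real.sqrt_le_sqrt (by linarith)
      rw [Real.sqrt_sq hξ0.le] at h1
      linarith
    have hspos : 0 < Real.sqrt (ξ^2 + x.2) := ha.trans hs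
    by_cases hx0 : x.1 = 0
    · rw [if_pos hx0, Real.norm_eq_abs, abs_of_nonneg (by positivity)]
      exact one_div_le_one_div_of_le ha hs.le
    · rw [if_neg hx0, Real.norm_eq_abs, abs_mul,
        abs_of_nonneg (by positivity : (0:ℝ) ≤ 1 / Real.sqrt (ξ^2 + x.2))]
      calc 1 / Real.sqrt (ξ^2 + x.2) * |Real.tanh (Real.sqrt (ξ^2+x.2)/(2*kB*x.1))|
          ≤ 1 / Real.sqrt (ξ^2 + x.2) * 1 := by
            apply mul_le_mul_of_nonneg_left (my_abs_tanh_le_one _) (by positivity)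
        _ = 1 / Real.sqrt (ξ^2 + x.2) := mul_one _
        _ ≤ 1 / a := one_div_le_one_div_of_le ha hs.le
  · exact intervalIntegrable_const
  · -- continuity in the parameter
    filter_upwards with ξ hξ
    rw [hI] at hξ
    have hξa : a < ξ := hξ.1
    have hξ0 : 0 < ξ := ha.trans hξa
    have hfun : (fun p : ℝ × ℝ =>
        if p.1 = 0 then 1/Real.sqrt (ξ^2+p.2)
        else (1/Real.sqrt (ξ^2+p.2)) * Real.tanh (Real.sqrt (ξ^2+p.2)/(2*kB*p.1)))
        = fun p : ℝ × ℝ => (1/Real.sqrt (ξ^2+p.2)) *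
            (if p.1 = 0 then 1 else Real.tanh (Real.sqrt (ξ^2+p.2)/(2*kB*p.1))) := by
      funext p
      split_ifs with h
      · rw [mul_one]
      · rfl
    rw [hfun]
    have hpos : 0 < ξ^2 + p₀.2 := by nlinarith
    have hc1 : ContinuousAt (fun p : ℝ × ℝ => 1/Real.sqrt (ξ^2+p.2)) p₀ := by
      apply ContinuousAt.div continuousAt_const
      · exact (Real.continuous_sqrt.comp (continuous_const.add continuous_snd)).continuousAt
      · exact (Real.sqrt_pos.mpr hpos).ne'
    apply ContinuousWithinAt.mul hc1.continuousWithinAt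
    -- continuity of ψ
    by_cases hp1 : p₀.1 = 0
    · -- p₀.1 = 0 : limit is 1
      unfold ContinuousWithinAt
      rw [show ((fun x : ℝ × ℝ => if x.1 = 0 then (1:ℝ)
          else Real.tanh (Real.sqrt (ξ^2+x.2)/(2*kB*x.1))) p₀) = 1 by
        simp [hp1]]
      set A : Set (ℝ × ℝ) := {p : ℝ × ℝ | p.1 = 0} with hA
      set B : Set (ℝ × ℝ) := {p : ℝ × ℝ | 0 < p.1 ∧ 0 ≤ p.2} with hB
      have hsub : W ⊆ A ∪ B := by
        intro p hp
        rcases eq_or_lt_of_le hp.1 with h | h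
        · exact Or.inl h.symm
        · exact Or.inr ⟨h, hp.2.2.1⟩
      have hmono : 𝓝[W] p₀ ≤ 𝓝[A] p₀ ⊔ 𝓝[B] p₀ := by
        rw [← nhdsWithin_union]
        exact nhdsWithin_mono _ hsub
      apply Tendsto.mono_left _ hmono
      rw [tendsto_sup]
      constructor
      · -- on A the function is constant 1
        have hconst : Tendsto (fun _ : ℝ × ℝ => (1:ℝ)) (𝓝[A] p₀) (𝓝 1) :=
          tendsto_const_nhds
        apply hconst.congr'
        filter_upwards [self_mem_nhdsWithin] with p hp
        exact (if_pos hp).symm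
      · -- on B, equals tanh of a quantity tending to +∞
        have hu : Tendsto (fun p : ℝ × ℝ => Real.sqrt (ξ^2+p.2)/(2*kB*p.1))
            (𝓝[B] p₀) atTop := by
          have hf : Tendsto (fun p : ℝ × ℝ => ξ * (2*kB*p.1)⁻¹) (𝓝[B] p₀) atTop := by
            apply Tendsto.const_mul_atTop hξ0
            apply Filter.Tendsto.inv_tendsto_nhdsGT_zero
            rw [tendsto_nhdsWithin_iff]
            constructor
            · have : Tendsto (fun p : ℝ × ℝ => 2*kB*p.1) (𝓝 p₀) (𝓝 (2*kB*p₀.1)) :=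
                ((continuous_const.mul continuous_fst).tendsto p₀)
              rw [hp1, mul_zero] at this
              exact this.mono_left nhdsWithin_le_nhds
            · filter_upwards [self_mem_nhdsWithin] with p hp
              have := hp.1
              show (0:ℝ) < 2*kB*p.1
              positivity
          apply tendsto_atTop_mono' _ _ hf
          · filter_upwards [self_mem_nhdsWithin] with p hp
            have hd : 0 < 2*kB*p.1 := by
              have := hp.1; positivity
            have h1 : ξ ≤ Real.sqrt (ξ^2 + p.2) := by
              have h2 : Real.sqrt (ξ^2) ≤ Real.sqrt (ξ^2 + p.2) :=
                Real.sqrt_le_sqrt (by linarith [hp.2])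
              rwa [Real.sqrt_sq hξ0.le] at h2
            rw [mul_inv_le_iff₀ hd, div_mul_eq_mul_div, le_div_iff₀ hd]
            nlinarith
        apply (my_tendsto_tanh_atTop.comp hu).congr'
        filter_upwards [self_mem_nhdsWithin] with p hp
        exact (if_neg hp.1.ne').symm
    · -- p₀.1 ≠ 0 : locally the else branch, which is continuous
      have hd0 : 2*kB*p₀.1 ≠ 0 := by
        simp only [mul_ne_zero_iff]
        exact ⟨⟨two_ne_zero, hkB.ne'⟩, hp1⟩
      have hc2 : ContinuousAt
          (fun p : ℝ × ℝ => Real.tanh (Real.sqrt (ξ^2+p.2)/(2*kB*p.1))) p₀ := by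
        apply my_continuous_tanh.continuousAt.comp
        apply ContinuousAt.div
        · exact (Real.continuous_sqrt.comp (continuous_const.add continuous_snd)).continuousAt
        · exact (continuous_const.mul continuous_fst).continuousAt
        · exact hd0
      apply hc2.continuousWithinAt.congr_of_eventuallyEq
      · have hmem : {p : ℝ × ℝ | p.1 ≠ 0} ∈ 𝓝[W] p₀ :=
          nhdsWithin_le_nhds
            ((isOpen_compl_singleton.preimage continuous_fst).mem_nhds hp1)
        filter_upwards [hmem] with p hp
        exact if_neg hp
      · exact if_neg hp1
end

section
/- Let f be the solution of the gap equation with f(T_c) = 0 and f'(T_c) < 0 given by f'(T_c) = 8k_B²T_c [∫_{ε}^{M} dη/cosh²η]/[∫_{ε}^{M} g(η)dη], M = ℏω_D/(2k_B T_c). Define δ(T) = f(T)/U₀ − 2N₀∫_{2k_B T_c ε}^{ℏω_D} (√(ξ²+f(T)) − ξ)dξ − 4N₀k_B T ∫_{2k_B T_c ε}^{ℏω_D} ln[(1+e^{−√(ξ²+f(T))/(k_B T)})/(1+e^{−ξ/(k_B T)})] dξ. Then δ(T_c) = 0, δ'(T_c) = 0, and δ''(T_c) = (2N₀ f'(T_c)/T_c)·(1/(1+e^{2ε})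 − 1/(1+e^{ℏω_D/(k_B T_c)})) < 0. -/
set_option maxHeartbeats 1000000

open Real intervalIntegral

noncomputable def gBCS : ℝ → ℝ := fun η =>
  if η = 0 then -2/3 else (1/η^2) * (1/(Real.cosh η)^2 - Real.tanh η / η)

lemma gBCS_neg {η : ℝ} (hη : 0 < η) : gBCS η < 0 := by
  have hcosh : 0 < Real.cosh η := Real.cosh_pos η
  have hs : 2*η < Real.sinh (2*η) := Real.self_lt_sinh_iff.mpr (by linarith)
  have hs2 : Real.sinh (2*η) = 2 * Real.sinh η * Real.cosh η := Real.sinh_two_mul η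
  have key : η < Real.sinh η * Real.cosh η := by nlinarith
  have h2 : 1/(Real.cosh η)^2 - Real.tanh η / η < 0 := by
    rw [Real.tanh_eq_sinh_div_cosh, sub_neg, div_lt_div_iff₀ (by positivity) hη,
      div_mul_eq_mul_div, lt_div_iff₀ hcosh]
    nlinarith [sq_nonneg (Real.cosh η)]
  have : gBCS η = (1/η^2) * (1/(Real.cosh η)^2 - Real.tanh η / η) := by
    simp [gBCS, hη.ne']
  rw [this]
  exact mul_neg_of_pos_of_neg (by positivity) h2

lemma tanh_half (y : ℝ) : Real.tanh (y/2) = 1 - 2*Real.exp (-y)/(1+Real.exp (-y)) := by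
  have h1 : Real.exp (-(y/2)) = (Real.exp (y/2))⁻¹ := Real.exp_neg _
  have h2 : Real.exp (-y) = ((Real.exp (y/2))^2)⁻¹ := by
    rw [Real.exp_neg]; congr 1
    rw [sq, ← Real.exp_add]; ring_nf
  have hp : (0:ℝ) < Real.exp (y/2) := Real.exp_pos _
  have hd : (0:ℝ) < Real.exp (y/2) + (Real.exp (y/2))⁻¹ := by positivity
  have hd2 : (0:ℝ) < 1 + ((Real.exp (y/2))^2)⁻¹ := by positivity
  rw [Real.tanh_eq_sinh_div_cosh, Real.sinh_eq, Real.cosh_eq, h1, h2]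
  field_simp
  ring

lemma fermi_ftc {c : ℝ} (hc : 0 < c) (A B : ℝ) :
    ∫ ξ in A..B, Real.exp (ξ/c)/(Real.exp (ξ/c)+1)^2
      = c/(Real.exp (A/c)+1) - c/(Real.exp (B/c)+1) := by
  have h : ∀ x ∈ Set.uIcc A B,
      HasDerivAt (fun ξ => -c/(Real.exp (ξ/c)+1))
        (Real.exp (x/c)/(Real.exp (x/c)+1)^2) x := by
    intro x _
    have h1 : HasDerivAt (fun ξ : ℝ => ξ/c) (1/c) x := by
      simpa using (hasDerivAt_id x).div_const c
    have h2 : HasDerivAt (fun ξ : ℝ => Real.exp (ξ/c)+1)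
        (Real.exp (x/c) * (1/c)) x := h1.exp.add_const 1
    have h3 : HasDerivAt (fun ξ : ℝ => -c/(Real.exp (ξ/c)+1))
        ((0*(Real.exp (x/c)+1) - (-c)*(Real.exp (x/c) * (1/c)))/(Real.exp (x/c)+1)^2) x :=
      (hasDerivAt_const x (-c)).div h2 (by positivity)
    convert h3 using 1
    field_simp
    ring
  have hcont : Continuous (fun x => Real.exp (x/c)/(Real.exp (x/c)+1)^2) := by
    apply Continuous.div (by continuity) (by continuity)
    intro x; positivity
  rw [intervalIntegral.integral_eq_sub_of_hasDerivAt h (hcont.intervalIntegrable A B)]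
  ring

open MeasureTheory Metric in
lemma hasDerivAt_intervalIntegral_param {F F' : ℝ → ℝ → ℝ} {x₀ A B r C : ℝ} (hr : 0 < r)
    (hFc : ∀ x ∈ ball x₀ r, ContinuousOn (F x) (Set.uIcc A B))
    (hF'c : ContinuousOn (F' x₀) (Set.uIcc A B))
    (hbound : ∀ ξ ∈ Set.uIoc A B, ∀ x ∈ ball x₀ r, |F' x ξ| ≤ C)
    (hdiff : ∀ ξ ∈ Set.uIoc A B, ∀ x ∈ ball x₀ r, HasDerivAt (fun y => F y ξ) (F' x ξ) x) :
    HasDerivAt (fun x => ∫ ξ in A..B, F x ξ) (∫ ξ in A..B, F' x₀ ξ) x₀ := by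
  have h₀ : x₀ ∈ ball x₀ r := mem_ball_self hr
  refine (intervalIntegral.hasDerivAt_integral_of_dominated_loc_of_deriv_le (𝕜 := ℝ)
      (bound := fun _ => C) (ball_mem_nhds x₀ hr) ?_ ?_ ?_ ?_ ?_ ?_).2
  · filter_upwards [ball_mem_nhds x₀ hr] with x hx
    exact ((hFc x hx).mono Set.uIoc_subset_uIcc).aestronglyMeasurable measurableSet_uIoc
  · exact (hFc x₀ h₀).intervalIntegrable
  · exact ((hF'c.mono Set.uIoc_subset_uIcc).aestronglyMeasurable measurableSet_uIoc)
  · exact MeasureTheory.ae_of_all _ fun ξ hξ x hx => by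
      simpa [Real.norm_eq_abs] using hbound ξ hξ x hx
  · exact intervalIntegrable_const
  · exact MeasureTheory.ae_of_all _ hdiff

open MeasureTheory Metric in
/-- For the condensation energy
`δ(T) = f(T)/U₀ − 2N₀∫(√(ξ²+f(T))−ξ)dξ
      − 4N₀k_BT∫ ln[(1+e^{−√(ξ²+f(T))/(k_BT)})/(1+e^{−ξ/(k_BT)})]dξ`
one has `δ(T_c) = 0`, `δ'(T_c) = 0` and
`δ''(T_c) = (2N₀f'(T_c)/T_c)(1/(1+e^{2ε}) − 1/(1+e^{ℏω_D/(k_BT_c)})) < 0`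
(one-sided derivatives from the left at `T_c`). -/
theorem delta_second_derivative_at_Tc
    (kB hbar ωD U0 N0 ε Tc : ℝ) (f fd : ℝ → ℝ)
    (hkB : 0 < kB) (hhbar : 0 < hbar) (hωD : 0 < ωD)
    (hU0 : 0 < U0) (hN0 : 0 < N0) (hε : 0 < ε) (hTc : 0 < Tc)
    (hcut : 2*kB*Tc*ε < hbar*ωD)
    (hTcdef : (∫ η in ε..(hbar*ωD/(2*kB*Tc)), Real.tanh η / η) = 1/(U0*N0))
    (hf_cont : ContinuousOn f (Set.Icc 0 Tc))
    (hf_nonneg : ∀ T ∈ Set.Icc (0:ℝ) Tc, 0 ≤ f T)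
    (hfTc : f Tc = 0)
    (hgap : ∀ T ∈ Set.Ioc (0:ℝ) Tc,
      (∫ ξ in (2*kB*Tc*ε)..(hbar*ωD),
        (1/Real.sqrt (ξ^2 + f T)) * Real.tanh (Real.sqrt (ξ^2 + f T)/(2*kB*T)))
        = 1/(U0*N0))
    (hfd : ∀ T ∈ Set.Ioo (0:ℝ) Tc, HasDerivAt f (fd T) T)
    (hfdTc : HasDerivWithinAt f (fd Tc) (Set.Iic Tc) Tc)
    (hfd_cont : ContinuousOn fd (Set.Ioc 0 Tc))
    (hfdTc_val : fd Tc = 8*kB^2*Tc *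
        (∫ η in ε..(hbar*ωD/(2*kB*Tc)), 1/(Real.cosh η)^2) /
        (∫ η in ε..(hbar*ωD/(2*kB*Tc)), gBCS η)) :
    (fun T => f T / U0
        - 2*N0 * (∫ ξ in (2*kB*Tc*ε)..(hbar*ωD), (Real.sqrt (ξ^2 + f T) - ξ))
        - 4*N0*kB*T * (∫ ξ in (2*kB*Tc*ε)..(hbar*ωD),
            Real.log ((1 + Real.exp (-(Real.sqrt (ξ^2 + f T))/(kB*T))) /
              (1 + Real.exp (-ξ/(kB*T)))))) Tc = 0 ∧
    derivWithin (fun T => f T / U0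
        - 2*N0 * (∫ ξ in (2*kB*Tc*ε)..(hbar*ωD), (Real.sqrt (ξ^2 + f T) - ξ))
        - 4*N0*kB*T * (∫ ξ in (2*kB*Tc*ε)..(hbar*ωD),
            Real.log ((1 + Real.exp (-(Real.sqrt (ξ^2 + f T))/(kB*T))) /
              (1 + Real.exp (-ξ/(kB*T)))))) (Set.Iic Tc) Tc = 0 ∧
    derivWithin (derivWithin (fun T => f T / U0
        - 2*N0 * (∫ ξ in (2*kB*Tc*ε)..(hbar*ωD), (Real.sqrt (ξ^2 + f T) - ξ))
        - 4*N0*kB*T * (∫ ξ in (2*kB*Tc*ε)..(hbar*ωD),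
            Real.log ((1 + Real.exp (-(Real.sqrt (ξ^2 + f T))/(kB*T))) /
              (1 + Real.exp (-ξ/(kB*T)))))) (Set.Iic Tc)) (Set.Iic Tc) Tc
      = (2*N0*fd Tc/Tc) *
        (1/(1 + Real.exp (2*ε)) - 1/(1 + Real.exp (hbar*ωD/(kB*Tc)))) ∧
    (2*N0*fd Tc/Tc) *
        (1/(1 + Real.exp (2*ε)) - 1/(1 + Real.exp (hbar*ωD/(kB*Tc)))) < 0 := by
  classical
  have hkB0 : (kB:ℝ) ≠ 0 := ne_of_gt hkB
  have hTc0 : (Tc:ℝ) ≠ 0 := ne_of_gt hTc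
  set a := 2*kB*Tc*ε with ha_def
  set b := hbar*ωD with hb_def
  have ha0 : 0 < a := by rw [ha_def]; positivity
  have hb0 : 0 < b := by rw [hb_def]; positivity
  have hab : a < b := hcut
  have haab : a ≤ b := hab.le
  have huIcc : Set.uIcc a b = Set.Icc a b := Set.uIcc_of_le haab
  have huIoc : Set.uIoc a b = Set.Ioc a b := Set.uIoc_of_le haab
  -- extension of f beyond Tc
  set fe : ℝ → ℝ := fun t => if t ≤ Tc then f t else fd Tc * (t - Tc) with hfe_def
  set fde : ℝ → ℝ := fun t => if t ≤ Tc then fd t else fd Tc with hfde_def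
  have hfe_eq : ∀ t, t ≤ Tc → fe t = f t := fun t ht => by simp [hfe_def, ht]
  have hfde_eq : ∀ t, t ≤ Tc → fde t = fd t := fun t ht => by simp [hfde_def, ht]
  have hfeTc : fe Tc = 0 := by rw [hfe_eq Tc le_rfl, hfTc]
  have hfdeTc : fde Tc = fd Tc := hfde_eq Tc le_rfl
  have hfe_deriv : ∀ t ∈ Set.Ioi (0:ℝ), HasDerivAt fe (fde t) t := by
    intro t ht
    rcases lt_trichotomy t Tc with h | h | h
    · have hd := hfd t ⟨ht, h⟩
      rw [hfde_eq t h.le]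
      refine hd.congr_of_eventuallyEq ?_
      filter_upwards [Iio_mem_nhds h] with y hy
      exact hfe_eq y hy.le
    · subst h
      rw [hfdeTc]
      have hleft : HasDerivWithinAt fe (fd t) (Set.Iic t) t :=
        hfdTc.congr (fun y hy => hfe_eq y hy) (hfe_eq t le_rfl)
      have hlin : HasDerivAt (fun y => fd t * (y - t)) (fd t) t := by
        simpa using ((hasDerivAt_id t).sub_const t).const_mul (fd t)
      have hright : HasDerivWithinAt fe (fd t) (Set.Ici t) t := by
        refine hlin.hasDerivWithinAt.congr (fun y hy => ?_) ?_
        · rcases eq_or_lt_of_le (Set.mem_Ici.mp hy) with rfl | hy'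
          · rw [hfeTc]; ring
          · simp [hfe_def, not_le.mpr hy']
        · rw [hfeTc]; ring
      have := hleft.union hright
      rw [Set.Iic_union_Ici] at this
      rwa [hasDerivWithinAt_univ] at this
    · have hlin : HasDerivAt (fun y => fd Tc * (y - Tc)) (fd Tc) t := by
        simpa using ((hasDerivAt_id t).sub_const Tc).const_mul (fd Tc)
      have : fde t = fd Tc := by simp [hfde_def, not_le.mpr h]
      rw [this]
      refine hlin.congr_of_eventuallyEq ?_
      filter_upwards [Ioi_mem_nhds h] with y hy
      simp [hfe_def, not_le.mpr (Set.mem_Ioi.mp hy)]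
  have hfe_cont : ∀ t ∈ Set.Ioi (0:ℝ), ContinuousAt fe t :=
    fun t ht => (hfe_deriv t ht).continuousAt
  have hfde_cont2 : ∀ t ∈ Set.Ioi (0:ℝ), ContinuousAt fde t := by
    intro t ht
    rcases lt_trichotomy t Tc with h | h | h
    · have : ContinuousAt fd t := (hfd_cont t ⟨ht, h.le⟩).continuousAt
        (Ioc_mem_nhds ht h)
      refine this.congr ?_
      filter_upwards [Iio_mem_nhds h] with y hy
      exact (hfde_eq y hy.le).symm
    · subst h
      have h1 : ContinuousWithinAt fd (Set.Ioc 0 t) t := hfd_cont t ⟨ht, le_rfl⟩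
      have h2 : ContinuousWithinAt fd (Set.Iic t) t := by
        refine h1.mono_of_mem_nhdsWithin ?_
        rw [show Set.Ioc (0:ℝ) t = Set.Ioi 0 ∩ Set.Iic t from (Set.Ioi_inter_Iic).symm]
        exact Filter.inter_mem (mem_nhdsWithin_of_mem_nhds (Ioi_mem_nhds ht))
          self_mem_nhdsWithin
      have h3 : ContinuousWithinAt fde (Set.Iic t) t :=
        h2.congr (fun y hy => hfde_eq y hy) (hfde_eq t le_rfl)
      have h4 : ContinuousWithinAt fde (Set.Ici t) t := by
        refine (continuousWithinAt_const (b := fd t)).congr (fun y hy => ?_) ?_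
        · rcases eq_or_lt_of_le (Set.mem_Ici.mp hy) with rfl | hy'
          · exact hfdeTc
          · simp [hfde_def, not_le.mpr hy']
        · exact hfdeTc
      have := h3.union h4
      rwa [Set.Iic_union_Ici, continuousWithinAt_univ] at this
    · refine (continuousAt_const (y := fd Tc)).congr ?_
      filter_upwards [Ioi_mem_nhds h] with y hy
      simp [hfde_def, not_le.mpr (Set.mem_Ioi.mp hy)]

  -- choose a radius r around Tc
  have hTcIoi : Tc ∈ Set.Ioi (0:ℝ) := hTc
  obtain ⟨r₀, hr₀, hr₀p⟩ : ∃ r₀ > 0, ∀ x, dist x Tc < r₀ → |fe x| < a^2/2 := by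
    have := (Metric.continuousAt_iff.mp (hfe_cont Tc hTcIoi)) (a^2/2) (by positivity)
    obtain ⟨d, hd, hdp⟩ := this
    exact ⟨d, hd, fun x hx => by
      have := hdp hx
      rwa [Real.dist_eq, hfeTc, sub_zero] at this⟩
  set r := min r₀ (Tc/2) with hr_def
  have hr0 : 0 < r := lt_min hr₀ (by positivity)
  have hrTc2 : r ≤ Tc/2 := min_le_right _ _
  have hfe_small : ∀ x ∈ ball Tc r, |fe x| < a^2/2 := fun x hx =>
    hr₀p x (lt_of_lt_of_le (mem_ball.mp hx) (min_le_left _ _))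
  have hxpos : ∀ x ∈ ball Tc r, Tc/2 < x := by
    intro x hx
    have := mem_ball.mp hx
    rw [Real.dist_eq, abs_lt] at this
    linarith [this.1, hrTc2]
  have hx0 : ∀ x ∈ ball Tc r, (0:ℝ) < x := fun x hx => lt_trans (by positivity) (hxpos x hx)
  have hPpos : ∀ x ∈ ball Tc r, ∀ ξ, a ≤ ξ → 0 < ξ^2 + fe x := by
    intro x hx ξ hξ
    have h1 : a^2 ≤ ξ^2 := by nlinarith
    have h2 := (abs_lt.mp (hfe_small x hx)).1
    nlinarith
  have hSpos : ∀ x ∈ ball Tc r, ∀ ξ, a ≤ ξ → 0 < Real.sqrt (ξ^2 + fe x) :=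
    fun x hx ξ hξ => Real.sqrt_pos.mpr (hPpos x hx ξ hξ)
  -- abbreviations
  set S : ℝ → ℝ → ℝ := fun x ξ => Real.sqrt (ξ^2 + fe x) with hS_def
  set nn : ℝ → ℝ → ℝ := fun x ξ =>
    Real.exp (-(S x ξ)/(kB*x))/(1+Real.exp (-(S x ξ)/(kB*x))) with hnn_def
  set dA : ℝ → ℝ → ℝ := fun x ξ => fde x / (2 * S x ξ) with hdA_def
  set cB : ℝ → ℝ → ℝ := fun x ξ =>
    Real.log (1 + Real.exp (-(S x ξ)/(kB*x))) - Real.log (1 + Real.exp (-ξ/(kB*x)))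
    with hcB_def
  set dB : ℝ → ℝ → ℝ := fun x ξ =>
    Real.exp (-(S x ξ)/(kB*x))/(1+Real.exp (-(S x ξ)/(kB*x)))
        * (S x ξ/(kB*x^2) - fde x/(2*S x ξ*(kB*x)))
      - Real.exp (-ξ/(kB*x))/(1+Real.exp (-ξ/(kB*x))) * (ξ/(kB*x^2)) with hdB_def
  set cC : ℝ → ℝ → ℝ := fun x ξ =>
    (S x ξ/(Real.exp (S x ξ/(kB*x))+1) - ξ/(Real.exp (ξ/(kB*x))+1))/(kB*x^2) with hcC_def
  set dC : ℝ → ℝ → ℝ := fun x ξ =>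
    ((fde x/(2*S x ξ)*(Real.exp (S x ξ/(kB*x))+1)
        - S x ξ*(Real.exp (S x ξ/(kB*x))
            *((fde x/(2*S x ξ)*(kB*x) - S x ξ*kB)/(kB*x)^2)))
       /(Real.exp (S x ξ/(kB*x))+1)^2
     - (0*(Real.exp (ξ/(kB*x))+1) - ξ*(Real.exp (ξ/(kB*x))*((0*(kB*x) - ξ*kB)/(kB*x)^2)))
       /(Real.exp (ξ/(kB*x))+1)^2) * (kB*x^2) / (kB*x^2)^2
    - (S x ξ/(Real.exp (S x ξ/(kB*x))+1) - ξ/(Real.exp (ξ/(kB*x))+1)) * (kB*(2*x)) / (kB*x^2)^2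
    with hdC_def
  set Af : ℝ → ℝ := fun t => ∫ ξ in a..b, (S t ξ - ξ) with hAf_def
  set Bf : ℝ → ℝ := fun t => ∫ ξ in a..b, cB t ξ with hBf_def
  set Cf : ℝ → ℝ := fun t => ∫ ξ in a..b, cC t ξ with hCf_def
  -- pointwise-in-ξ derivatives in the parameter
  have hkxne : ∀ x ∈ ball Tc r, kB*x ≠ 0 := fun x hx => by
    have := hx0 x hx; positivity
  have hDA : ∀ ξ, a ≤ ξ → ∀ x ∈ ball Tc r,
      HasDerivAt (fun y => S y ξ - ξ) (dA x ξ) x := by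
    intro ξ hξ x hx
    have hPd : HasDerivAt (fun y => ξ^2 + fe y) (fde x) x :=
      (hfe_deriv x (hx0 x hx)).const_add _
    simp only [hS_def, hdA_def]
    exact (hPd.sqrt (hPpos x hx ξ hξ).ne').sub_const ξ
  have hSd : ∀ ξ, a ≤ ξ → ∀ x ∈ ball Tc r,
      HasDerivAt (fun y => S y ξ) (fde x/(2*S x ξ)) x := by
    intro ξ hξ x hx
    have hPd : HasDerivAt (fun y => ξ^2 + fe y) (fde x) x :=
      (hfe_deriv x (hx0 x hx)).const_add _
    simp only [hS_def]
    exact hPd.sqrt (hPpos x hx ξ hξ).ne'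
  have hkx : ∀ x : ℝ, HasDerivAt (fun y => kB*y) kB x := fun x => by
    simpa using (hasDerivAt_id x).const_mul kB
  have hDB : ∀ ξ, a ≤ ξ → ∀ x ∈ ball Tc r,
      HasDerivAt (fun y => cB y ξ) (dB x ξ) x := by
    intro ξ hξ x hx
    have hx' := hx0 x hx
    have hkx0 := hkxne x hx
    have hS0 := (hSpos x hx ξ hξ).ne'
    have hq1 := ((hSd ξ hξ x hx).neg.div (hkx x) hkx0)
    have hl1 := ((hq1.exp.const_add 1).log (by positivity))
    have hq2 := ((hasDerivAt_const x (-ξ)).div (hkx x) hkx0)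
    have hl2 := ((hq2.exp.const_add 1).log (by positivity))
    have h := hl1.sub hl2
    simp only [hcB_def, hdB_def]
    refine h.congr_deriv ?_
    simp only [Pi.div_apply, Pi.neg_apply, Pi.sub_apply, Pi.add_apply]
    have he1 : (1:ℝ) + Real.exp (-(S x ξ)/(kB*x)) ≠ 0 := by positivity
    have he2 : (1:ℝ) + Real.exp (-ξ/(kB*x)) ≠ 0 := by positivity
    field_simp
    ring
  have hDC : ∀ ξ, a ≤ ξ → ∀ x ∈ ball Tc r,
      HasDerivAt (fun y => cC y ξ) (dC x ξ) x := by
    intro ξ hξ x hx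
    have hx' := hx0 x hx
    have hkx0 := hkxne x hx
    have hu := ((hSd ξ hξ x hx).div (hkx x) hkx0)
    have he1 := hu.exp.add_const 1
    have hne1 : Real.exp (S x ξ/(kB*x)) + 1 ≠ 0 := by positivity
    have hd1 := (hSd ξ hξ x hx).div he1 hne1
    have hv := ((hasDerivAt_const x ξ).div (hkx x) hkx0)
    have he2 := hv.exp.add_const 1
    have hne2 : Real.exp (ξ/(kB*x)) + 1 ≠ 0 := by positivity
    have hd2 := (hasDerivAt_const x ξ).div he2 hne2
    have hden : HasDerivAt (fun y => kB*y^2) (kB*(2*x)) x := by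
      have := (hasDerivAt_pow 2 x).const_mul kB
      norm_num at this
      convert this using 1 <;> ring
    have hden0 : kB*x^2 ≠ 0 := by positivity
    have h := (hd1.sub hd2).div hden hden0
    simp only [hcC_def, hdC_def]
    refine h.congr_deriv ?_
    simp only [Pi.div_apply, Pi.neg_apply, Pi.sub_apply, Pi.add_apply]
    ring
  -- joint continuity on a compact neighbourhood
  set W : Set (ℝ × ℝ) := (closedBall Tc (r/2)) ×ˢ (Set.Icc a b) with hW_def
  have hWcomp : IsCompact W := (isCompact_closedBall _ _).prod isCompact_Icc
  have hW1 : ∀ p ∈ W, p.1 ∈ ball Tc r := by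
    intro p hp
    have := (Set.mem_prod.mp hp).1
    exact closedBall_subset_ball (by linarith) this
  have hW2 : ∀ p ∈ W, a ≤ p.2 := fun p hp => ((Set.mem_prod.mp hp).2).1
  have hcfe : ContinuousOn (fun p : ℝ × ℝ => fe p.1) W := fun p hp =>
    (((hfe_cont p.1 (hx0 p.1 (hW1 p hp))).comp continuous_fst.continuousAt)).continuousWithinAt
  have hcfde : ContinuousOn (fun p : ℝ × ℝ => fde p.1) W := fun p hp =>
    (((hfde_cont2 p.1 (hx0 p.1 (hW1 p hp))).comp continuous_fst.continuousAt)).continuousWithinAt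
  have hcS : ContinuousOn (fun p : ℝ × ℝ => S p.1 p.2) W := by
    simp only [hS_def]
    exact (((continuous_snd.pow 2).continuousOn.add hcfe)).sqrt
  have hSne : ∀ p ∈ W, S p.1 p.2 ≠ 0 := fun p hp =>
    (hSpos p.1 (hW1 p hp) p.2 (hW2 p hp)).ne'
  have hc1 : ContinuousOn (fun p : ℝ × ℝ => kB*p.1) W :=
    (continuous_const.mul continuous_fst).continuousOn
  have h1ne : ∀ p ∈ W, kB*p.1 ≠ 0 := fun p hp => hkxne p.1 (hW1 p hp)
  have hc2 : ContinuousOn (fun p : ℝ × ℝ => kB*p.1^2) W :=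
    (continuous_const.mul (continuous_fst.pow 2)).continuousOn
  have h2ne : ∀ p ∈ W, kB*p.1^2 ≠ 0 := by
    intro p hp
    have := hx0 p.1 (hW1 p hp); positivity
  have hcq1 : ContinuousOn (fun p : ℝ × ℝ => -(S p.1 p.2)/(kB*p.1)) W :=
    (hcS.neg.div hc1 h1ne)
  have hce1 : ContinuousOn (fun p : ℝ × ℝ => Real.exp (-(S p.1 p.2)/(kB*p.1))) W := hcq1.rexp
  have hcq2 : ContinuousOn (fun p : ℝ × ℝ => -p.2/(kB*p.1)) W :=
    (continuous_snd.neg.continuousOn.div hc1 h1ne)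
  have hce2 : ContinuousOn (fun p : ℝ × ℝ => Real.exp (-p.2/(kB*p.1))) W := hcq2.rexp
  have hcu : ContinuousOn (fun p : ℝ × ℝ => S p.1 p.2/(kB*p.1)) W := hcS.div hc1 h1ne
  have hceu : ContinuousOn (fun p : ℝ × ℝ => Real.exp (S p.1 p.2/(kB*p.1))) W := hcu.rexp
  have hceu1ne : ∀ p ∈ W, Real.exp (S p.1 p.2/(kB*p.1)) + 1 ≠ 0 := fun p hp => by positivity
  have hcv : ContinuousOn (fun p : ℝ × ℝ => p.2/(kB*p.1)) W :=
    (continuous_snd.continuousOn.div hc1 h1ne)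
  have hcev : ContinuousOn (fun p : ℝ × ℝ => Real.exp (p.2/(kB*p.1))) W := hcv.rexp
  have hcev1ne : ∀ p ∈ W, Real.exp (p.2/(kB*p.1)) + 1 ≠ 0 := fun p hp => by positivity
  have he1ne : ∀ p ∈ W, (1:ℝ) + Real.exp (-(S p.1 p.2)/(kB*p.1)) ≠ 0 := fun p hp => by positivity
  have he2ne : ∀ p ∈ W, (1:ℝ) + Real.exp (-p.2/(kB*p.1)) ≠ 0 := fun p hp => by positivity
  have hcA : ContinuousOn (fun p : ℝ × ℝ => S p.1 p.2 - p.2) W :=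
    hcS.sub continuous_snd.continuousOn
  have hcdA : ContinuousOn (fun p : ℝ × ℝ => dA p.1 p.2) W := by
    simp only [hdA_def]
    exact hcfde.div (continuousOn_const.mul hcS) (fun p hp => by
      have := hSpos p.1 (hW1 p hp) p.2 (hW2 p hp); positivity)
  have hccB : ContinuousOn (fun p : ℝ × ℝ => cB p.1 p.2) W := by
    simp only [hcB_def]
    exact ((continuousOn_const.add hce1).log he1ne).sub ((continuousOn_const.add hce2).log he2ne)
  have hcnn : ContinuousOn (fun p : ℝ × ℝ => nn p.1 p.2) W := by
    simp only [hnn_def]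
    exact hce1.div (continuousOn_const.add hce1) he1ne
  have hSposW : ∀ p ∈ W, 0 < S p.1 p.2 := fun p hp => hSpos p.1 (hW1 p hp) p.2 (hW2 p hp)
  have hSne2 : ∀ p ∈ W, (2:ℝ)*S p.1 p.2 ≠ 0 := fun p hp => by
    have := hSposW p hp; positivity
  have h1sq : ∀ p ∈ W, (kB*p.1)^2 ≠ 0 := fun p hp => pow_ne_zero 2 (h1ne p hp)
  have h2sq : ∀ p ∈ W, (kB*p.1^2)^2 ≠ 0 := fun p hp => pow_ne_zero 2 (h2ne p hp)
  have he1sq : ∀ p ∈ W, (Real.exp (S p.1 p.2/(kB*p.1))+1)^2 ≠ 0 :=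
    fun p hp => pow_ne_zero 2 (hceu1ne p hp)
  have he2sq : ∀ p ∈ W, (Real.exp (p.2/(kB*p.1))+1)^2 ≠ 0 :=
    fun p hp => pow_ne_zero 2 (hcev1ne p hp)
  have hcnn1 : ContinuousOn (fun p : ℝ × ℝ =>
      Real.exp (-(S p.1 p.2)/(kB*p.1))/(1+Real.exp (-(S p.1 p.2)/(kB*p.1)))) W :=
    hce1.div (continuousOn_const.add hce1) he1ne
  have hcnn2 : ContinuousOn (fun p : ℝ × ℝ =>
      Real.exp (-p.2/(kB*p.1))/(1+Real.exp (-p.2/(kB*p.1)))) W :=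
    hce2.div (continuousOn_const.add hce2) he2ne
  have hcdB : ContinuousOn (fun p : ℝ × ℝ => dB p.1 p.2) W := by
    simp only [hdB_def]
    have hd1 : ContinuousOn (fun p : ℝ × ℝ => S p.1 p.2/(kB*p.1^2)) W := hcS.div hc2 h2ne
    have hd2 : ContinuousOn (fun p : ℝ × ℝ => fde p.1/(2*S p.1 p.2*(kB*p.1))) W := by
      refine hcfde.div ((continuousOn_const.mul hcS).mul hc1) (fun p hp => ?_)
      have h1 := hSposW p hp
      have h2 := hx0 p.1 (hW1 p hp)
      have : 0 < 2*S p.1 p.2*(kB*p.1) := by positivity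
      exact this.ne'
    have hd3 : ContinuousOn (fun p : ℝ × ℝ => p.2/(kB*p.1^2)) W :=
      continuous_snd.continuousOn.div hc2 h2ne
    exact (hcnn1.mul (hd1.sub hd2)).sub (hcnn2.mul hd3)
  have hccC : ContinuousOn (fun p : ℝ × ℝ => cC p.1 p.2) W := by
    simp only [hcC_def]
    exact ((hcS.div (hceu.add continuousOn_const) hceu1ne).sub
      (continuous_snd.continuousOn.div (hcev.add continuousOn_const) hcev1ne)).div hc2 h2ne
  have hcdC : ContinuousOn (fun p : ℝ × ℝ => dC p.1 p.2) W := by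
    simp only [hdC_def]
    have hcfrac1 : ContinuousOn (fun p : ℝ × ℝ => fde p.1/(2*S p.1 p.2)) W :=
      hcfde.div (continuousOn_const.mul hcS) hSne2
    have hcup : ContinuousOn (fun p : ℝ × ℝ =>
        (fde p.1/(2*S p.1 p.2)*(kB*p.1) - S p.1 p.2*kB)/(kB*p.1)^2) W :=
      ((hcfrac1.mul hc1).sub (hcS.mul continuousOn_const)).div (hc1.pow 2) h1sq
    have hnum1 : ContinuousOn (fun p : ℝ × ℝ =>
        fde p.1/(2*S p.1 p.2)*(Real.exp (S p.1 p.2/(kB*p.1))+1)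
          - S p.1 p.2*(Real.exp (S p.1 p.2/(kB*p.1))
              *((fde p.1/(2*S p.1 p.2)*(kB*p.1) - S p.1 p.2*kB)/(kB*p.1)^2))) W :=
      (hcfrac1.mul (hceu.add continuousOn_const)).sub (hcS.mul (hceu.mul hcup))
    have hvp : ContinuousOn (fun p : ℝ × ℝ => (0*(kB*p.1) - p.2*kB)/(kB*p.1)^2) W :=
      ((continuousOn_const.mul hc1).sub
        (continuous_snd.continuousOn.mul continuousOn_const)).div (hc1.pow 2) h1sq
    have hnum2 : ContinuousOn (fun p : ℝ × ℝ =>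
        0*(Real.exp (p.2/(kB*p.1))+1)
          - p.2*(Real.exp (p.2/(kB*p.1))*((0*(kB*p.1) - p.2*kB)/(kB*p.1)^2))) W :=
      (continuousOn_const.mul (hcev.add continuousOn_const)).sub
        (continuous_snd.continuousOn.mul (hcev.mul hvp))
    have hbig : ContinuousOn (fun p : ℝ × ℝ =>
        ((fde p.1/(2*S p.1 p.2)*(Real.exp (S p.1 p.2/(kB*p.1))+1)
          - S p.1 p.2*(Real.exp (S p.1 p.2/(kB*p.1))
              *((fde p.1/(2*S p.1 p.2)*(kB*p.1) - S p.1 p.2*kB)/(kB*p.1)^2)))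
           /(Real.exp (S p.1 p.2/(kB*p.1))+1)^2
         - (0*(Real.exp (p.2/(kB*p.1))+1)
            - p.2*(Real.exp (p.2/(kB*p.1))*((0*(kB*p.1) - p.2*kB)/(kB*p.1)^2)))
           /(Real.exp (p.2/(kB*p.1))+1)^2) * (kB*p.1^2) / (kB*p.1^2)^2) W :=
      (((hnum1.div ((hceu.add continuousOn_const).pow 2) he1sq).sub
        (hnum2.div ((hcev.add continuousOn_const).pow 2) he2sq)).mul hc2).div (hc2.pow 2) h2sq
    have htail : ContinuousOn (fun p : ℝ × ℝ =>
        (S p.1 p.2/(Real.exp (S p.1 p.2/(kB*p.1))+1) - p.2/(Real.exp (p.2/(kB*p.1))+1))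
          * (kB*(2*p.1)) / (kB*p.1^2)^2) W :=
      ((((hcS.div (hceu.add continuousOn_const) hceu1ne).sub
        (continuous_snd.continuousOn.div (hcev.add continuousOn_const) hcev1ne)).mul
        (continuous_const.mul (continuous_const.mul continuous_fst)).continuousOn).div
        (hc2.pow 2) h2sq)
    exact hbig.sub htail
  obtain ⟨CdA, hCdA⟩ := hWcomp.exists_bound_of_continuousOn hcdA
  obtain ⟨CdB, hCdB⟩ := hWcomp.exists_bound_of_continuousOn hcdB
  obtain ⟨CdC, hCdC⟩ := hWcomp.exists_bound_of_continuousOn hcdC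
  -- slices
  have hslice : ∀ (G : ℝ × ℝ → ℝ), ContinuousOn G W → ∀ x ∈ closedBall Tc (r/2),
      ContinuousOn (fun ξ => G (x, ξ)) (Set.uIcc a b) := by
    intro G hG x hx
    rw [huIcc]
    exact hG.comp (Continuous.continuousOn (by fun_prop))
      (fun ξ hξ => Set.mem_prod.mpr ⟨hx, hξ⟩)
  have hmemW : ∀ x ∈ closedBall Tc (r/2), ∀ ξ ∈ Set.uIoc a b, ((x, ξ) : ℝ × ℝ) ∈ W := by
    intro x hx ξ hξ
    rw [huIoc] at hξ
    exact Set.mem_prod.mpr ⟨hx, Set.Ioc_subset_Icc_self hξ⟩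
  -- derivative of the three integrals
  have hballs : ∀ t ∈ ball Tc (r/2), ∀ x ∈ ball t (r/2 - dist t Tc),
      x ∈ closedBall Tc (r/2) ∧ x ∈ ball Tc r := by
    intro t ht x hx
    have h1 : dist x Tc ≤ dist x t + dist t Tc := dist_triangle x t Tc
    have h2 : dist x t < r/2 - dist t Tc := mem_ball.mp hx
    constructor
    · exact mem_closedBall.mpr (by linarith)
    · exact mem_ball.mpr (by linarith)
  have hrt : ∀ t ∈ ball Tc (r/2), 0 < r/2 - dist t Tc := by
    intro t ht
    have := mem_ball.mp ht
    rw [dist_comm] at this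
    rw [dist_comm]
    linarith
  have htcb : ∀ t ∈ ball Tc (r/2), t ∈ closedBall Tc (r/2) := fun t ht => ball_subset_closedBall ht
  have hAder : ∀ t ∈ ball Tc (r/2),
      HasDerivAt Af (∫ ξ in a..b, dA t ξ) t := by
    intro t ht
    simp only [hAf_def]
    refine hasDerivAt_intervalIntegral_param (C := CdA) (hrt t ht)
      (fun x hx => ?_) ?_ (fun ξ hξ x hx => ?_) (fun ξ hξ x hx => ?_)
    · exact hslice _ hcA x (hballs t ht x hx).1
    · exact hslice _ hcdA t (htcb t ht)
    · have := hCdA (x, ξ) (hmemW x (hballs t ht x hx).1 ξ hξ)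
      simpa [Real.norm_eq_abs] using this
    · have hξ' : a ≤ ξ := by rw [huIoc] at hξ; exact hξ.1.le
      exact hDA ξ hξ' x (hballs t ht x hx).2
  have hBder : ∀ t ∈ ball Tc (r/2),
      HasDerivAt Bf (∫ ξ in a..b, dB t ξ) t := by
    intro t ht
    simp only [hBf_def]
    refine hasDerivAt_intervalIntegral_param (C := CdB) (hrt t ht)
      (fun x hx => ?_) ?_ (fun ξ hξ x hx => ?_) (fun ξ hξ x hx => ?_)
    · exact hslice _ hccB x (hballs t ht x hx).1
    · exact hslice _ hcdB t (htcb t ht)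
    · have := hCdB (x, ξ) (hmemW x (hballs t ht x hx).1 ξ hξ)
      simpa [Real.norm_eq_abs] using this
    · have hξ' : a ≤ ξ := by rw [huIoc] at hξ; exact hξ.1.le
      exact hDB ξ hξ' x (hballs t ht x hx).2
  have hCder : ∀ t ∈ ball Tc (r/2),
      HasDerivAt Cf (∫ ξ in a..b, dC t ξ) t := by
    intro t ht
    simp only [hCf_def]
    refine hasDerivAt_intervalIntegral_param (C := CdC) (hrt t ht)
      (fun x hx => ?_) ?_ (fun ξ hξ x hx => ?_) (fun ξ hξ x hx => ?_)
    · exact hslice _ hccC x (hballs t ht x hx).1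
    · exact hslice _ hcdC t (htcb t ht)
    · have := hCdC (x, ξ) (hmemW x (hballs t ht x hx).1 ξ hξ)
      simpa [Real.norm_eq_abs] using this
    · have hξ' : a ≤ ξ := by rw [huIoc] at hξ; exact hξ.1.le
      exact hDC ξ hξ' x (hballs t ht x hx).2
  -- derivative of the (extended) condensation energy
  set D1 : ℝ → ℝ := fun t =>
    fde t/U0 - 2*N0*(∫ ξ in a..b, dA t ξ)
      - 4*N0*kB*(Bf t + t*(∫ ξ in a..b, dB t ξ)) with hD1_def
  set D2 : ℝ → ℝ := fun t => -(4*N0*kB)*(Bf t + t*Cf t) with hD2_def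
  set δe : ℝ → ℝ := fun t => fe t/U0 - 2*N0*Af t - 4*N0*kB*(t*Bf t) with hδe_def
  have hballsub : ball Tc (r/2) ⊆ ball Tc r := ball_subset_ball (by linarith)
  have hδe' : ∀ t ∈ ball Tc (r/2), HasDerivAt δe (D1 t) t := by
    intro t ht
    have h1 : HasDerivAt (fun t => fe t/U0) (fde t/U0) t :=
      (hfe_deriv t (hx0 t (hballsub ht))).div_const U0
    have h2 : HasDerivAt (fun t => 2*N0*Af t) (2*N0*(∫ ξ in a..b, dA t ξ)) t :=
      (hAder t ht).const_mul (2*N0)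
    have h3 : HasDerivAt (fun t => 4*N0*kB*(t*Bf t))
        (4*N0*kB*(1*Bf t + t*(∫ ξ in a..b, dB t ξ))) t :=
      ((hasDerivAt_id t).mul (hBder t ht)).const_mul (4*N0*kB)
    have h := (h1.sub h2).sub h3
    simp only [hδe_def, hD1_def]
    refine h.congr_deriv ?_
    ring
  have hcinvS : ContinuousOn (fun p : ℝ × ℝ => 1/S p.1 p.2) W := continuousOn_const.div hcS hSne
  have hcnnS : ContinuousOn (fun p : ℝ × ℝ => nn p.1 p.2/S p.1 p.2) W := hcnn.div hcS hSne
  -- the gap equation kills the parameter-derivative terms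
  have hGapD : ∀ t ∈ ball Tc (r/2), t ≤ Tc → D1 t = D2 t := by
    intro t ht htle
    have htr : t ∈ ball Tc r := hballsub ht
    have ht0 : 0 < t := hx0 t htr
    have hft : fe t = f t := hfe_eq t htle
    have hkt0 : kB*t ≠ 0 := hkxne t htr
    have hInt_invS : IntervalIntegrable (fun ξ => 1/S t ξ) volume a b :=
      (hslice _ hcinvS t (htcb t ht)).intervalIntegrable
    have hInt_nnS : IntervalIntegrable (fun ξ => nn t ξ/S t ξ) volume a b :=
      (hslice _ hcnnS t (htcb t ht)).intervalIntegrable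
    have hInt_cC : IntervalIntegrable (fun ξ => cC t ξ) volume a b :=
      (hslice _ hccC t (htcb t ht)).intervalIntegrable
    have hsplit : Set.EqOn (fun ξ => dB t ξ)
        (fun ξ => cC t ξ - (fde t/(2*(kB*t)))*(nn t ξ/S t ξ)) (Set.uIcc a b) := by
      intro ξ hξ
      rw [huIcc] at hξ
      have hS0 : S t ξ ≠ 0 := (hSpos t htr ξ hξ.1).ne'
      simp only [hdB_def, hcC_def, hnn_def]
      rw [show -(S t ξ)/(kB*t) = -(S t ξ/(kB*t)) by ring,
        show -ξ/(kB*t) = -(ξ/(kB*t)) by ring, Real.exp_neg, Real.exp_neg]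
      have hh1 : Real.exp (S t ξ/(kB*t)) + 1 ≠ 0 := by positivity
      have hh2 : Real.exp (ξ/(kB*t)) + 1 ≠ 0 := by positivity
      have hh3 : (1:ℝ) + (Real.exp (S t ξ/(kB*t)))⁻¹ ≠ 0 := by positivity
      have hh4 : (1:ℝ) + (Real.exp (ξ/(kB*t)))⁻¹ ≠ 0 := by positivity
      field_simp
      ring
    have hIdB : (∫ ξ in a..b, dB t ξ)
        = Cf t - (fde t/(2*(kB*t)))*(∫ ξ in a..b, nn t ξ/S t ξ) := by
      rw [intervalIntegral.integral_congr hsplit, hCf_def]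
      rw [intervalIntegral.integral_sub hInt_cC (hInt_nnS.const_mul _),
        intervalIntegral.integral_const_mul]
    have hIdA : (∫ ξ in a..b, dA t ξ) = (fde t/2)*(∫ ξ in a..b, 1/S t ξ) := by
      rw [← intervalIntegral.integral_const_mul]
      refine intervalIntegral.integral_congr (fun ξ hξ => ?_)
      simp only [hdA_def]
      ring
    have hgapt : (∫ ξ in a..b, (1/S t ξ)*(1 - 2*nn t ξ)) = 1/(U0*N0) := by
      rw [← hgap t ⟨ht0, htle⟩]
      refine intervalIntegral.integral_congr (fun ξ hξ => ?_)
      rw [huIcc] at hξ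
      have hS0 : S t ξ ≠ 0 := (hSpos t htr ξ hξ.1).ne'
      simp only [hS_def, hnn_def, hft]
      rw [show Real.sqrt (ξ^2+f t)/(2*kB*t) = (Real.sqrt (ξ^2+f t)/(kB*t))/2 by ring, tanh_half,
        show -(Real.sqrt (ξ^2+f t))/(kB*t) = -(Real.sqrt (ξ^2+f t)/(kB*t)) by ring]
      ring
    have hlin : (∫ ξ in a..b, (1/S t ξ)*(1 - 2*nn t ξ))
        = (∫ ξ in a..b, 1/S t ξ) - 2*(∫ ξ in a..b, nn t ξ/S t ξ) := by
      rw [← intervalIntegral.integral_const_mul,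
        ← intervalIntegral.integral_sub hInt_invS (hInt_nnS.const_mul _)]
      refine intervalIntegral.integral_congr (fun ξ hξ => ?_)
      ring
    have hg : (∫ ξ in a..b, 1/S t ξ)
        = 1/(U0*N0) + 2*(∫ ξ in a..b, nn t ξ/S t ξ) := by
      rw [← hgapt, hlin]; ring
    simp only [hD1_def, hD2_def]
    rw [hIdA, hIdB, hg]
    field_simp
    ring
  -- identification with the goal function on (-∞, Tc]
  set Dl : ℝ → ℝ := fun T => f T / U0
      - 2*N0 * (∫ ξ in a..b, (Real.sqrt (ξ^2 + f T) - ξ))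
      - 4*N0*kB*T * (∫ ξ in a..b,
          Real.log ((1 + Real.exp (-(Real.sqrt (ξ^2 + f T))/(kB*T))) /
            (1 + Real.exp (-ξ/(kB*T))))) with hDl_def
  have hTcball : Tc ∈ ball Tc (r/2) := mem_ball_self (by positivity)
  have hR2 : ∀ t, t ≤ Tc → δe t = Dl t := by
    intro t ht
    simp only [hδe_def, hDl_def, hAf_def, hBf_def, hcB_def, hS_def, hfe_eq t ht]
    rw [show (∫ ξ in a..b, (Real.log (1 + Real.exp (-(Real.sqrt (ξ^2 + f t))/(kB*t)))
          - Real.log (1 + Real.exp (-ξ/(kB*t)))))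
        = ∫ ξ in a..b, Real.log ((1 + Real.exp (-(Real.sqrt (ξ^2 + f t))/(kB*t)))
            / (1 + Real.exp (-ξ/(kB*t)))) from
      intervalIntegral.integral_congr (fun ξ hξ =>
        (Real.log_div (by positivity) (by positivity)).symm)]
    ring
  have hSTc : ∀ ξ, a ≤ ξ → S Tc ξ = ξ := by
    intro ξ hξ
    simp only [hS_def, hfeTc]
    rw [add_zero]
    exact Real.sqrt_sq (le_trans ha0.le hξ)
  have hBfTc : Bf Tc = 0 := by
    simp only [hBf_def]
    rw [show (∫ ξ in a..b, cB Tc ξ) = ∫ ξ in a..b, (0:ℝ) from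
      intervalIntegral.integral_congr (fun ξ hξ => by
        simp only [hcB_def]
        rw [hSTc ξ (huIcc ▸ hξ).1, sub_self])]
    simp
  have hCfTc : Cf Tc = 0 := by
    simp only [hCf_def]
    rw [show (∫ ξ in a..b, cC Tc ξ) = ∫ ξ in a..b, (0:ℝ) from
      intervalIntegral.integral_congr (fun ξ hξ => by
        simp only [hcC_def]
        rw [hSTc ξ (huIcc ▸ hξ).1, sub_self, zero_div])]
    simp
  have hAfTc : Af Tc = 0 := by
    simp only [hAf_def]
    rw [show (∫ ξ in a..b, (S Tc ξ - ξ)) = ∫ ξ in a..b, (0:ℝ) from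
      intervalIntegral.integral_congr (fun ξ hξ => by
        rw [hSTc ξ (huIcc ▸ hξ).1, sub_self])]
    simp
  have hconj1 : Dl Tc = 0 := by
    rw [← hR2 Tc le_rfl]
    simp only [hδe_def]
    rw [hAfTc, hBfTc, hfeTc]
    ring
  have hD1Tc : D1 Tc = 0 := by
    rw [hGapD Tc hTcball le_rfl]
    simp only [hD2_def]
    rw [hBfTc, hCfTc]
    ring
  have hDlTcderiv : HasDerivWithinAt Dl (D1 Tc) (Set.Iic Tc) Tc :=
    ((hδe' Tc hTcball).hasDerivWithinAt).congr (fun y hy => (hR2 y hy).symm)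
      ((hR2 Tc le_rfl).symm)
  have hUD : UniqueDiffWithinAt ℝ (Set.Iic Tc) Tc :=
    (uniqueDiffOn_Iic Tc) Tc (Set.mem_Iic.mpr le_rfl)
  have hconj2 : derivWithin Dl (Set.Iic Tc) Tc = 0 := by
    rw [hDlTcderiv.derivWithin hUD]
    exact hD1Tc
  -- second derivative
  have hinner : ∀ t ∈ ball Tc (r/2) ∩ Set.Iic Tc,
      derivWithin Dl (Set.Iic Tc) t = D2 t := by
    rintro t ⟨htb, htle⟩
    rcases eq_or_lt_of_le (Set.mem_Iic.mp htle) with heq | hlt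
    · subst heq
      rw [hDlTcderiv.derivWithin hUD]
      exact hGapD t htb le_rfl
    · rw [derivWithin_of_mem_nhds (Iic_mem_nhds hlt)]
      have h2 : HasDerivAt Dl (D1 t) t := by
        refine (hδe' t htb).congr_of_eventuallyEq ?_
        filter_upwards [Iio_mem_nhds hlt] with y hy
        exact (hR2 y hy.le).symm
      rw [h2.deriv]
      exact hGapD t htb htle
  have houter : derivWithin (derivWithin Dl (Set.Iic Tc)) (Set.Iic Tc) Tc
      = derivWithin D2 (Set.Iic Tc) Tc := by
    refine Filter.EventuallyEq.derivWithin_eq ?_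
      (hinner Tc ⟨hTcball, Set.mem_Iic.mpr le_rfl⟩)
    filter_upwards [Filter.inter_mem
      (mem_nhdsWithin_of_mem_nhds (ball_mem_nhds Tc (half_pos hr0)))
      self_mem_nhdsWithin] with y hy using hinner y hy
  have hD2der : HasDerivAt D2
      (-(4*N0*kB)*((∫ ξ in a..b, dB Tc ξ) + (1*Cf Tc + Tc*(∫ ξ in a..b, dC Tc ξ)))) Tc := by
    simp only [hD2_def]
    exact ((hBder Tc hTcball).add ((hasDerivAt_id Tc).mul (hCder Tc hTcball))).const_mul _
  have hptTc : Set.EqOn (fun ξ => dB Tc ξ + Tc*dC Tc ξ)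
      (fun ξ => -(fd Tc/(2*(kB*Tc)^2)) * (Real.exp (ξ/(kB*Tc))/(Real.exp (ξ/(kB*Tc))+1)^2))
      (Set.uIcc a b) := by
    intro ξ hξ
    have hξ1 : a ≤ ξ := (huIcc ▸ hξ).1
    have hξ0 : 0 < ξ := lt_of_lt_of_le ha0 hξ1
    simp only [hdB_def, hdC_def, hSTc ξ hξ1, hfdeTc]
    rw [show -ξ/(kB*Tc) = -(ξ/(kB*Tc)) by ring, Real.exp_neg]
    have hh2 : Real.exp (ξ/(kB*Tc)) + 1 ≠ 0 := by positivity
    have hh4 : (1:ℝ) + (Real.exp (ξ/(kB*Tc)))⁻¹ ≠ 0 := by positivity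
    field_simp
    ring
  have hIntdBTc : IntervalIntegrable (fun ξ => dB Tc ξ) volume a b :=
    (hslice _ hcdB Tc (htcb Tc hTcball)).intervalIntegrable
  have hIntdCTc : IntervalIntegrable (fun ξ => dC Tc ξ) volume a b :=
    (hslice _ hcdC Tc (htcb Tc hTcball)).intervalIntegrable
  have hcomb : (∫ ξ in a..b, dB Tc ξ) + Tc*(∫ ξ in a..b, dC Tc ξ)
      = ∫ ξ in a..b, (dB Tc ξ + Tc*dC Tc ξ) := by
    rw [intervalIntegral.integral_add hIntdBTc (hIntdCTc.const_mul Tc),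
      intervalIntegral.integral_const_mul]
  have hIval : (∫ ξ in a..b, (dB Tc ξ + Tc*dC Tc ξ))
      = -(fd Tc/(2*(kB*Tc)^2)) * ((kB*Tc)/(Real.exp (a/(kB*Tc))+1)
          - (kB*Tc)/(Real.exp (b/(kB*Tc))+1)) := by
    rw [intervalIntegral.integral_congr hptTc, intervalIntegral.integral_const_mul,
      fermi_ftc (by positivity) a b]
  have hexpa : a/(kB*Tc) = 2*ε := by
    rw [ha_def]; field_simp
  have hconj3 : derivWithin (derivWithin Dl (Set.Iic Tc)) (Set.Iic Tc) Tc
      = (2*N0*fd Tc/Tc) * (1/(1 + Real.exp (2*ε)) - 1/(1 + Real.exp (b/(kB*Tc)))) := by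
    rw [houter, (hD2der.hasDerivWithinAt).derivWithin hUD, hCfTc]
    have step1 : -(4*N0*kB)*((∫ ξ in a..b, dB Tc ξ) + (1*0 + Tc*(∫ ξ in a..b, dC Tc ξ)))
        = -(4*N0*kB)*((∫ ξ in a..b, dB Tc ξ) + Tc*(∫ ξ in a..b, dC Tc ξ)) := by ring
    rw [step1, hcomb, hIval, hexpa]
    have hh1 : (1:ℝ) + Real.exp (2*ε) ≠ 0 := by positivity
    have hh2 : (1:ℝ) + Real.exp (b/(kB*Tc)) ≠ 0 := by positivity
    have hh1' : Real.exp (2*ε) + 1 ≠ 0 := by positivity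
    have hh2' : Real.exp (b/(kB*Tc)) + 1 ≠ 0 := by positivity
    field_simp
    ring
  -- the sign
  have hM : ε < b/(2*kB*Tc) := by
    rw [lt_div_iff₀ (by positivity)]
    have : ε*(2*kB*Tc) = a := by rw [ha_def]; ring
    rw [this]; exact hab
  have hnumpos : 0 < ∫ η in ε..b/(2*kB*Tc), 1/(Real.cosh η)^2 := by
    apply intervalIntegral_pos_of_pos_on
    · refine Continuous.intervalIntegrable ?_ _ _
      refine Continuous.div continuous_const (Real.continuous_cosh.pow 2) (fun x => ?_)
      positivity
    · intro x hx
      positivity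
    · exact hM
  have hdenneg : (∫ η in ε..b/(2*kB*Tc), gBCS η) < 0 := by
    have hInt : IntervalIntegrable gBCS volume ε (b/(2*kB*Tc)) := by
      apply ContinuousOn.intervalIntegrable
      rw [Set.uIcc_of_le hM.le]
      have hne : ∀ η ∈ Set.Icc ε (b/(2*kB*Tc)), η ≠ 0 :=
        fun η hη => (lt_of_lt_of_le hε hη.1).ne'
      refine ContinuousOn.congr
        (f := fun η => (1/η^2) * (1/(Real.cosh η)^2 - Real.tanh η / η)) ?_ ?_
      · refine ContinuousOn.mul
          (continuousOn_const.div ((continuous_pow 2).continuousOn)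
            (fun η hη => pow_ne_zero 2 (hne η hη))) ?_
        refine ContinuousOn.sub
          (continuousOn_const.div ((Real.continuous_cosh.pow 2).continuousOn)
            (fun η hη => by positivity)) ?_
        refine ContinuousOn.congr
          ((Real.continuous_sinh.continuousOn.div Real.continuous_cosh.continuousOn
            (fun x _ => (Real.cosh_pos x).ne')).div continuousOn_id hne) ?_
        intro η hη
        simp [Real.tanh_eq_sinh_div_cosh]
      · intro η hη
        simp [gBCS, hne η hη]
    have hpos : 0 < ∫ η in ε..b/(2*kB*Tc), -gBCS η := by
      apply intervalIntegral_pos_of_pos_on hInt.neg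
      · intro x hx
        have := gBCS_neg (lt_trans hε hx.1)
        simp only [Pi.neg_apply]
        linarith
      · exact hM
    rw [intervalIntegral.integral_neg] at hpos
    linarith
  have hfdneg : fd Tc < 0 := by
    rw [hfdTc_val]
    exact div_neg_of_pos_of_neg (mul_pos (by positivity) hnumpos) hdenneg
  have hbracket : 0 < 1/(1 + Real.exp (2*ε)) - 1/(1 + Real.exp (b/(kB*Tc))) := by
    have h2ε : 2*ε < b/(kB*Tc) := by
      rw [lt_div_iff₀ (by positivity)]
      have : 2*ε*(kB*Tc) = a := by rw [ha_def]; ring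
      rw [this]; exact hab
    have hee := Real.exp_lt_exp.mpr h2ε
    have h1 : (0:ℝ) < 1 + Real.exp (2*ε) := by positivity
    rw [sub_pos]
    exact one_div_lt_one_div_of_lt h1 (by linarith)
  have hconj4 : (2*N0*fd Tc/Tc) * (1/(1 + Real.exp (2*ε)) - 1/(1 + Real.exp (b/(kB*Tc)))) < 0 := by
    refine mul_neg_of_neg_of_pos ?_ hbracket
    refine div_neg_of_neg_of_pos ?_ hTc
    nlinarith
  exact ⟨hconj1, hconj2, hconj3, hconj4⟩
end
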